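/- Let i be a natural number with i ≥ 2, let k be a natural number with 2^(i−2) ≤ k and k < 2^(i−1), and let p = 2^{−i} (so 0 < p ≤ 1). Then the probability that a binomial random variable with k trials and success probability p takes the value 1 is strictly greater than 1/8; that is, (PMF.binomial p _ k) 1 > 1/8. -/

import Mathlib

open scoped ENNReal

lemma real_aux_binom (i k : ℕ) (hi : 2 ≤ i)
    (hk1 : 2 ^ (i - 2) ≤ k) (hk2 : k < 2 ^ (i - 1)) :
    (1/8 : ℝ) < (2⁻¹ : ℝ) ^ i * (1 - (2⁻¹ : ℝ) ^ i) ^ (k - 1) * k := by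
  set q : ℝ := (2⁻¹ : ℝ) ^ i with hq
  have hq0 : 0 < q := by positivity
  have hpow : (2 : ℝ) ^ i = 2 ^ (i - 2) * 4 := by
    rw [show (4:ℝ) = 2^2 by norm_num, ← pow_add]; congr 1; omega
  have hq2 : q * (2 : ℝ) ^ i = 1 := by
    rw [hq, inv_pow, inv_mul_cancel₀ (by positivity)]
  have hk0 : 1 ≤ k := le_trans (Nat.one_le_two_pow) hk1
  have h1 : (1/4 : ℝ) ≤ (k : ℝ) * q := by
    have : ((2:ℝ) ^ (i - 2)) ≤ (k : ℝ) := by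
      exact_mod_cast Nat.cast_le.mpr hk1 |>.trans_eq (by push_cast; ring)
    nlinarith [hq0]
  have hpow2 : (2 : ℝ) ^ i = 2 ^ (i - 1) * 2 := by
    rw [← pow_succ]; congr 1; omega
  have hkq : ((k : ℝ) - 1) * q < 1/2 := by
    have hk2' : (k : ℝ) ≤ (2:ℝ) ^ (i-1) := by
      exact_mod_cast Nat.cast_le.mpr hk2.le |>.trans_eq (by push_cast; ring)
    nlinarith [hq0]
  have hq1 : q ≤ 1 := by
    rw [hq]; exact pow_le_one₀ (by norm_num) (by norm_num)
  have hbern : 1 + (k - 1 : ℕ) * (-q) ≤ (1 + (-q)) ^ (k - 1) :=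
    one_add_mul_le_pow (by nlinarith) (k - 1)
  have hcast : ((k - 1 : ℕ) : ℝ) = (k : ℝ) - 1 := by
    have := hk0; push_cast [Nat.cast_sub hk0]; ring
  have h2 : (1/2 : ℝ) < (1 - q) ^ (k - 1) := by
    have e : (1 : ℝ) + -q = 1 - q := by ring
    rw [e, hcast] at hbern
    nlinarith [hbern, hkq]
  have hpos : (0:ℝ) < (1 - q) ^ (k - 1) := lt_trans (by norm_num) h2
  calc (1/8 : ℝ) < (1/4) * (1/2) + (1/4) * ((1 - q)^(k-1) - 1/2) := by nlinarith
  _ ≤ ((k:ℝ) * q) * (1 - q)^(k-1) := by nlinarith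
  _ = q * (1 - q)^(k-1) * k := by ring

theorem binomial_one_gt_eighth (i k : ℕ) (hi : 2 ≤ i)
    (hk1 : 2 ^ (i - 2) ≤ k) (hk2 : k < 2 ^ (i - 1))
    (p : ℝ≥0∞) (hp : p = 2⁻¹ ^ i) (hp1 : p ≤ 1) :
    (PMF.binomial p.toNNReal (by simpa using ENNReal.toNNReal_mono ENNReal.one_ne_top hp1) k) 1 > 1 / 8 := by
  have hk0 : 1 ≤ k := le_trans (Nat.one_le_two_pow) hk1
  have hval : ((1 : Fin (k+1)) : ℕ) = 1 := by
    simp [Fin.val_one', Nat.mod_eq_of_lt (show 1 < k + 1 by omega)]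
  have hle : p.toNNReal ≤ 1 := by simpa using ENNReal.toNNReal_mono ENNReal.one_ne_top hp1
  show (PMF.binomial p.toNNReal hle k) 1 > 1 / 8
  rw [PMF.binomial_apply, hval, Fin.val_last]
  have hpne : p ≠ ∞ := by rw [hp]; exact ENNReal.pow_ne_top (by simp)
  rw [ENNReal.coe_toNNReal hpne]
  have hone : (1 - p) ≠ ∞ := by
    exact ne_top_of_le_ne_top (by simp) tsub_le_self
  have hfin : p ^ 1 * (1 - p) ^ (k - 1) * (k.choose 1 : ℕ) ≠ ∞ := by
    apply ENNReal.mul_ne_top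
    apply ENNReal.mul_ne_top
    · simpa using hpne
    · exact ENNReal.pow_ne_top hone
    · simp
  rw [gt_iff_lt, ← ENNReal.toReal_lt_toReal (by simp) hfin]
  have htp : p.toReal = (2⁻¹ : ℝ) ^ i := by
    rw [hp]; simp [ENNReal.toReal_pow]
  have ht1 : (1 - p).toReal = 1 - (2⁻¹ : ℝ) ^ i := by
    rw [ENNReal.toReal_sub_of_le hp1 (by simp), htp]; simp
  rw [ENNReal.toReal_mul, ENNReal.toReal_mul, ENNReal.toReal_pow, ENNReal.toReal_pow,
    htp, ht1]
  simp only [Nat.choose_one_right, ENNReal.toReal_natCast, pow_one]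
  have := real_aux_binom i k hi hk1 hk2
  calc (1/8 : ℝ≥0∞).toReal = 1/8 := by norm_num
  _ < _ := this
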